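/- Let H be a complex Hilbert space, T a densely defined self-adjoint unbounded operator on H, and M : H → H a bounded self-adjoint operator. For k ≥ 1 define the Sobolev norm on dom T^k by ‖x‖_{T,k}² = ‖T^k x‖² + ‖x‖², where dom T¹ = dom T, dom T^{k+1} = {x ∈ dom T : T x ∈ dom T^k}, and T^{k+1} x = T^k(T x). Suppose that for every k ≥ 1, M maps dom T^k into itself and is bounded for the norm ‖·‖_{T,k}, i.e., there is C_k > 0 with ‖M x‖_{T,k} ≤ C_k ‖x‖_{T,k} for all x ∈ dom T^k. Then for every k ≥ 1, dom (T + M)^k = dom T^k (with T + M having domain dom T), and the norms ‖·‖_{T,k} and ‖·‖_{T+M,k} are equivalent on this common domain: there exist constants c, C > 0 such that c ‖x‖_{T,k} ≤ ‖x‖_{T+M,k} ≤ C ‖x‖_{T,k} for all x ∈ dom T^k, where ‖x‖_{T+M,k}² = ‖(T + M)^k x‖² + ‖x‖². -/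

import Mathlib

set_option linter.unusedSectionVars false
set_option maxHeartbeats 1000000

open scoped InnerProductSpace

variable {H : Type*} [NormedAddCommGroup H] [InnerProductSpace ℂ H] [CompleteSpace H]

/-- The sum `T + M` of an unbounded operator `T` and a bounded operator `M`,
with domain `dom T`, given by `x ↦ T x + M x`. -/
noncomputable def addBounded (T : H →ₗ.[ℂ] H) (M : H →L[ℂ] H) : H →ₗ.[ℂ] H where
  domain := T.domain
  toFun := T.toFun + (M : H →ₗ[ℂ] H).comp T.domain.subtype

/-- The domain of the `k`-th power of an unbounded operator `T`:
`dom T⁰ = H`, `dom T¹ = dom T` and `dom T^(k+1) = {x ∈ dom T : T x ∈ dom T^k}`. -/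
def domPow (T : H →ₗ.[ℂ] H) : ℕ → Set H
  | 0 => Set.univ
  | k + 1 => {x : H | ∃ hx : x ∈ T.domain, T ⟨x, hx⟩ ∈ domPow T k}

/-- The `k`-th power of `T` applied to `x ∈ dom T^k`: `T⁰ x = x` and
`T^(k+1) x = T^k (T x)`. -/
noncomputable def powApply (T : H →ₗ.[ℂ] H) : (k : ℕ) → (x : H) → x ∈ domPow T k → H
  | 0, x, _ => x
  | k + 1, x, hx => powApply T k (T ⟨x, hx.choose⟩) hx.choose_spec

/-- The `k`-th Sobolev norm of `x ∈ dom T^k`: `‖x‖_{T,k} = √(‖T^k x‖² + ‖x‖²)`. -/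
noncomputable def sobNorm (T : H →ₗ.[ℂ] H) (k : ℕ) (x : H) (hx : x ∈ domPow T k) : ℝ :=
  Real.sqrt (‖powApply T k x hx‖ ^ 2 + ‖x‖ ^ 2)

/- ## Auxiliary real-number lemmas -/

lemma aux_sqrt_le_of_sq {a b : ℝ} (hb : 0 ≤ b) (h : a ≤ b ^ 2) : Real.sqrt a ≤ b := by
  calc Real.sqrt a ≤ Real.sqrt (b ^ 2) := Real.sqrt_le_sqrt h
    _ = b := Real.sqrt_sq hb

lemma logconvex_max (a : ℕ → ℝ) (k : ℕ) (ha : ∀ i, 0 ≤ a i)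
    (h : ∀ i, i + 2 ≤ k → a (i+1) ^ 2 ≤ a i * a (i+2)) :
    ∀ j, j ≤ k → a j ≤ max (a 0) (a k) := by
  have mono : ∀ i, i + 2 ≤ k → a i ≤ a (i+1) → a (i+1) ≤ a (i+2) := by
    intro i hi hle
    rcases eq_or_lt_of_le (ha (i+1)) with h0 | h0
    · rw [← h0]; exact ha _
    · nlinarith [h i hi, mul_le_mul_of_nonneg_right hle (ha (i+2))]
  have aux : ∀ d j, j + 1 + d ≤ k → a j ≤ a (j+1) → a (j+d) ≤ a (j+1+d) := by
    intro d
    induction d with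
    | zero => intro j _ hle; exact hle
    | succ d ih =>
        intro j hd hle
        have h1 : a (j+d) ≤ a (j+1+d) := ih j (by omega) hle
        have h2 := mono (j+d) (by omega) (by rw [show j+1+d = j+d+1 from by omega] at h1; exact h1)
        rw [show j+1+(d+1) = j+d+2 from by omega, show j+(d+1) = j+d+1 from by omega]
        exact h2
  have aux2 : ∀ d j, j + 1 + d ≤ k → a j ≤ a (j+1) → a (j+1) ≤ a (j+1+d) := by
    intro d
    induction d with
    | zero => intro j _ _; exact le_refl _
    | succ d ih =>
        intro j hd hle
        have step : a (j+1+d) ≤ a (j+1+d+1) := by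
          have := aux (d+1) j hd hle
          rw [show j+(d+1) = j+1+d from by omega,
            show j+1+(d+1) = j+1+d+1 from by omega] at this
          exact this
        refine le_trans (ih j (by omega) hle) ?_
        rw [show j+1+(d+1) = j+1+d+1 from by omega]
        exact step
  intro j
  induction j with
  | zero => intro _; exact le_max_left _ _
  | succ j ih =>
      intro hj
      rcases le_or_gt (a (j+1)) (a j) with hle | hlt
      · exact le_trans hle (ih (by omega))
      · have hle : a j ≤ a (j+1) := le_of_lt hlt
        have := aux2 (k - (j+1)) j (by omega) hle
        rw [show j+1+(k-(j+1)) = k from by omega] at this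
        exact le_trans this (le_max_right _ _)

/- ## Basic lemmas on `domPow` and `powApply` -/

variable {A : H →ₗ.[ℂ] H}

lemma powApply_succ {k : ℕ} {x : H} (hx : x ∈ domPow A (k+1)) (h1 : x ∈ A.domain)
    (hTx : A ⟨x, h1⟩ ∈ domPow A k) :
    powApply A (k+1) x hx = powApply A k (A ⟨x, h1⟩) hTx := rfl

lemma domPow_mono {k : ℕ} : domPow A (k+1) ⊆ domPow A k := by
  induction k with
  | zero => intro x _; trivial
  | succ k ih => rintro x ⟨h1, h2⟩; exact ⟨h1, ih h2⟩

lemma domPow_le {j k : ℕ} (h : j ≤ k) : domPow A k ⊆ domPow A j := by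
  induction k with
  | zero => rw [Nat.le_zero.mp h]
  | succ k ih =>
      rcases Nat.lt_or_ge j (k+1) with h' | h'
      · exact fun x hx => ih (Nat.lt_succ_iff.mp h') (domPow_mono hx)
      · rw [le_antisymm h h']

lemma mem_domain_of_domPow {k : ℕ} {x : H} (hk : 1 ≤ k) (hx : x ∈ domPow A k) :
    x ∈ A.domain := (domPow_le hk hx).choose

lemma domPow_add_mem {k : ℕ} {x y : H} (hx : x ∈ domPow A k) (hy : y ∈ domPow A k) :
    x + y ∈ domPow A k := by
  induction k generalizing x y with
  | zero => trivial
  | succ k ih =>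
      obtain ⟨hx1, hx2⟩ := hx
      obtain ⟨hy1, hy2⟩ := hy
      refine ⟨Submodule.add_mem _ hx1 hy1, ?_⟩
      have : A ⟨x + y, Submodule.add_mem _ hx1 hy1⟩ = A ⟨x, hx1⟩ + A ⟨y, hy1⟩ := by
        rw [← A.map_add ⟨x, hx1⟩ ⟨y, hy1⟩]; rfl
      rw [this]
      exact ih hx2 hy2

lemma domPow_neg_mem {k : ℕ} {x : H} (hx : x ∈ domPow A k) : -x ∈ domPow A k := by
  induction k generalizing x with
  | zero => trivial
  | succ k ih =>
      obtain ⟨hx1, hx2⟩ := hx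
      refine ⟨Submodule.neg_mem _ hx1, ?_⟩
      have : A ⟨-x, Submodule.neg_mem _ hx1⟩ = -(A ⟨x, hx1⟩) := by
        rw [← A.map_neg ⟨x, hx1⟩]; rfl
      rw [this]
      exact ih hx2

lemma domPow_sub_mem {k : ℕ} {x y : H} (hx : x ∈ domPow A k) (hy : y ∈ domPow A k) :
    x - y ∈ domPow A k := by
  rw [sub_eq_add_neg]; exact domPow_add_mem hx (domPow_neg_mem hy)

lemma powApply_congr {k : ℕ} {x y : H} (h : x = y) (hx : x ∈ domPow A k)
    (hy : y ∈ domPow A k) : powApply A k x hx = powApply A k y hy := by subst h; rfl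

lemma powApply_index_congr {j k : ℕ} (h : j = k) {x : H} (hj : x ∈ domPow A j)
    (hk : x ∈ domPow A k) : powApply A j x hj = powApply A k x hk := by subst h; rfl

lemma powApply_one {x : H} (hx : x ∈ domPow A 1) (h1 : x ∈ A.domain) :
    powApply A 1 x hx = A ⟨x, h1⟩ := rfl

lemma powApply_add {k : ℕ} {x y : H} (hx : x ∈ domPow A k) (hy : y ∈ domPow A k)
    (hxy : x + y ∈ domPow A k) :
    powApply A k (x + y) hxy = powApply A k x hx + powApply A k y hy := by
  induction k generalizing x y with
  | zero => rfl
  | succ k ih =>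
      obtain ⟨hx1, hx2⟩ := hx
      obtain ⟨hy1, hy2⟩ := hy
      have h1 : x + y ∈ A.domain := Submodule.add_mem _ hx1 hy1
      have heq : A ⟨x + y, h1⟩ = A ⟨x, hx1⟩ + A ⟨y, hy1⟩ := by
        rw [← A.map_add ⟨x, hx1⟩ ⟨y, hy1⟩]; rfl
      have h2 : A ⟨x + y, h1⟩ ∈ domPow A k := by rw [heq]; exact domPow_add_mem hx2 hy2
      rw [powApply_succ hxy h1 h2, powApply_succ ⟨hx1, hx2⟩ hx1 hx2,
        powApply_succ ⟨hy1, hy2⟩ hy1 hy2,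
        powApply_congr heq h2 (domPow_add_mem hx2 hy2)]
      exact ih hx2 hy2 _

lemma powApply_neg {k : ℕ} {x : H} (hx : x ∈ domPow A k) (hx' : -x ∈ domPow A k) :
    powApply A k (-x) hx' = -(powApply A k x hx) := by
  induction k generalizing x with
  | zero => rfl
  | succ k ih =>
      obtain ⟨hx1, hx2⟩ := hx
      have h1 : -x ∈ A.domain := Submodule.neg_mem _ hx1
      have heq : A ⟨-x, h1⟩ = -(A ⟨x, hx1⟩) := by rw [← A.map_neg ⟨x, hx1⟩]; rfl
      have h2 : A ⟨-x, h1⟩ ∈ domPow A k := by rw [heq]; exact domPow_neg_mem hx2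
      rw [powApply_succ hx' h1 h2, powApply_succ ⟨hx1, hx2⟩ hx1 hx2,
        powApply_congr heq h2 (domPow_neg_mem hx2)]
      exact ih hx2 _

lemma powApply_sub {k : ℕ} {x y : H} (hx : x ∈ domPow A k) (hy : y ∈ domPow A k)
    (hxy : x - y ∈ domPow A k) :
    powApply A k (x - y) hxy = powApply A k x hx - powApply A k y hy := by
  have h1 : -y ∈ domPow A k := domPow_neg_mem hy
  have h2 : x + (-y) ∈ domPow A k := domPow_add_mem hx h1
  rw [powApply_congr (sub_eq_add_neg x y) hxy h2, powApply_add hx h1 h2,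
    powApply_neg hy h1, sub_eq_add_neg]

lemma powApply_mem_and_comp (a : ℕ) : ∀ (b : ℕ) (x : H) (hx : x ∈ domPow A (a + b))
    (hb : x ∈ domPow A b),
    ∃ h : powApply A b x hb ∈ domPow A a,
      powApply A (a + b) x hx = powApply A a (powApply A b x hb) h := by
  intro b
  induction b with
  | zero => intro x hx hb; exact ⟨hx, rfl⟩
  | succ b ih =>
      intro x hx hb
      obtain ⟨h1, h2⟩ := hb
      have hx' : A ⟨x, h1⟩ ∈ domPow A (a + b) := by
        have : x ∈ domPow A (a + b + 1) := hx
        exact this.choose_spec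
      obtain ⟨hm, heq⟩ := ih (A ⟨x, h1⟩) hx' h2
      exact ⟨hm, heq⟩

/- ## Interpolation for symmetric operators -/

lemma interp_sq (hsym : ∀ u v : A.domain, ⟪A u, (v : H)⟫_ℂ = ⟪(u : H), A v⟫_ℂ)
    {i : ℕ} {x : H} (hx : x ∈ domPow A (i+2))
    (hi : x ∈ domPow A i) (hi1 : x ∈ domPow A (i+1)) :
    ‖powApply A (i+1) x hi1‖ ^ 2 ≤ ‖powApply A i x hi‖ * ‖powApply A (i+2) x hx‖ := by
  obtain ⟨m1, e1⟩ := powApply_mem_and_comp 1 i x (by rw [Nat.add_comm]; exact hi1) hi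
  obtain ⟨m2, e2⟩ := powApply_mem_and_comp 1 (i+1) x (by rw [Nat.add_comm]; exact hx) hi1
  have d1 : powApply A i x hi ∈ A.domain := mem_domain_of_domPow le_rfl m1
  have d2 : powApply A (i+1) x hi1 ∈ A.domain := mem_domain_of_domPow le_rfl m2
  have e1' : powApply A (i+1) x hi1 = A ⟨powApply A i x hi, d1⟩ := by
    rw [powApply_index_congr (by omega : i+1 = 1+i) hi1 (by rw [Nat.add_comm]; exact hi1), e1]
    rfl
  have e2' : powApply A (i+2) x hx = A ⟨powApply A (i+1) x hi1, d2⟩ := by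
    rw [powApply_index_congr (by omega : i+2 = 1+(i+1)) hx (by rw [Nat.add_comm]; exact hx), e2]
    rfl
  have hs : ⟪A ⟨powApply A i x hi, d1⟩, powApply A (i+1) x hi1⟫_ℂ
      = ⟪powApply A i x hi, A ⟨powApply A (i+1) x hi1, d2⟩⟫_ℂ :=
    hsym ⟨powApply A i x hi, d1⟩ ⟨powApply A (i+1) x hi1, d2⟩
  have key : ⟪powApply A (i+1) x hi1, powApply A (i+1) x hi1⟫_ℂ
      = ⟪powApply A i x hi, powApply A (i+2) x hx⟫_ℂ :=
    (congrArg (fun z => (⟪z, powApply A (i+1) x hi1⟫_ℂ)) e1').trans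
      (hs.trans (congrArg (fun z => (⟪powApply A i x hi, z⟫_ℂ)) e2'.symm))
  have h1 : ‖powApply A (i+1) x hi1‖ ^ 2
      = RCLike.re ⟪powApply A i x hi, powApply A (i+2) x hx⟫_ℂ := by
    rw [← key, inner_self_eq_norm_sq]
  rw [h1]
  exact le_trans (RCLike.re_le_norm _) (norm_inner_le_norm _ _)

lemma interp (hsym : ∀ u v : A.domain, ⟪A u, (v : H)⟫_ℂ = ⟪(u : H), A v⟫_ℂ)
    {k j : ℕ} (hj : j ≤ k) {x : H} (hx : x ∈ domPow A k) (hxj : x ∈ domPow A j) :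
    ‖powApply A j x hxj‖ ≤ max ‖x‖ ‖powApply A k x hx‖ := by
  classical
  set a : ℕ → ℝ := fun i => if h : x ∈ domPow A i then ‖powApply A i x h‖ else 0 with ha_def
  have ha : ∀ i, 0 ≤ a i := by
    intro i; simp only [ha_def]; split <;> [exact norm_nonneg _; exact le_refl 0]
  have hconv : ∀ i, i + 2 ≤ k → a (i+1) ^ 2 ≤ a i * a (i+2) := by
    intro i hik
    have h2 : x ∈ domPow A (i+2) := domPow_le hik hx
    have h1 : x ∈ domPow A (i+1) := domPow_mono h2
    have h0 : x ∈ domPow A i := domPow_mono h1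
    simp only [ha_def, dif_pos h0, dif_pos h1, dif_pos h2]
    exact interp_sq hsym h2 h0 h1
  have h0 : x ∈ domPow A 0 := trivial
  have := logconvex_max a k ha hconv j hj
  simp only [ha_def, dif_pos hxj, dif_pos hx, dif_pos h0] at this
  exact this

/- ## Sobolev norm lemmas -/

lemma sob_nonneg {k : ℕ} {x : H} (hx : x ∈ domPow A k) : 0 ≤ sobNorm A k x hx :=
  Real.sqrt_nonneg _

lemma sq_sob {k : ℕ} {x : H} (hx : x ∈ domPow A k) :
    sobNorm A k x hx ^ 2 = ‖powApply A k x hx‖ ^ 2 + ‖x‖ ^ 2 :=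
  Real.sq_sqrt (by positivity)

lemma cs2 {a1 b1 a2 b2 s1 s2 : ℝ} (ha1 : 0 ≤ a1) (hb1 : 0 ≤ b1) (ha2 : 0 ≤ a2)
    (hb2 : 0 ≤ b2) (hs1 : 0 ≤ s1) (hs2 : 0 ≤ s2)
    (h1 : a1^2 + b1^2 ≤ s1^2) (h2 : a2^2 + b2^2 ≤ s2^2) :
    a1*a2 + b1*b2 ≤ s1*s2 := by
  have hcs : (a1*a2 + b1*b2)^2 ≤ (a1^2+b1^2) * (a2^2+b2^2) := by
    nlinarith [sq_nonneg (a1*b2 - a2*b1)]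
  have h3 : (a1*a2 + b1*b2)^2 ≤ (s1*s2)^2 := by
    refine le_trans hcs ?_
    calc (a1^2+b1^2) * (a2^2+b2^2) ≤ s1^2 * s2^2 :=
          mul_le_mul h1 h2 (by positivity) (by positivity)
      _ = (s1*s2)^2 := by ring
  have := Real.sqrt_le_sqrt h3
  rwa [Real.sqrt_sq (by positivity), Real.sqrt_sq (by positivity)] at this

lemma norm_powApply_le_sob {k : ℕ} {x : H} (hx : x ∈ domPow A k) :
    ‖powApply A k x hx‖ ≤ sobNorm A k x hx := by
  rw [show ‖powApply A k x hx‖ = Real.sqrt (‖powApply A k x hx‖^2) from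
    (Real.sqrt_sq (norm_nonneg _)).symm]
  exact Real.sqrt_le_sqrt (by nlinarith [sq_nonneg ‖x‖])

lemma norm_le_sob {k : ℕ} {x : H} (hx : x ∈ domPow A k) : ‖x‖ ≤ sobNorm A k x hx := by
  rw [show ‖x‖ = Real.sqrt (‖x‖^2) from (Real.sqrt_sq (norm_nonneg _)).symm]
  exact Real.sqrt_le_sqrt (by nlinarith [sq_nonneg ‖powApply A k x hx‖])

lemma sob_triangle_sub {k : ℕ} {x y : H} (hx : x ∈ domPow A k) (hy : y ∈ domPow A k)
    (hxy : x - y ∈ domPow A k) :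
    sobNorm A k (x - y) hxy ≤ sobNorm A k x hx + sobNorm A k y hy := by
  apply aux_sqrt_le_of_sq (by have := sob_nonneg hx; have := sob_nonneg hy; linarith)
  have h1 : ‖powApply A k (x-y) hxy‖ ≤ ‖powApply A k x hx‖ + ‖powApply A k y hy‖ := by
    rw [powApply_sub hx hy hxy]; exact norm_sub_le _ _
  have h2 : ‖x - y‖ ≤ ‖x‖ + ‖y‖ := norm_sub_le _ _
  have hcs := cs2 (norm_nonneg (powApply A k x hx)) (norm_nonneg x)
    (norm_nonneg (powApply A k y hy)) (norm_nonneg y) (sob_nonneg hx) (sob_nonneg hy)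
    (le_of_eq (sq_sob hx).symm) (le_of_eq (sq_sob hy).symm)
  nlinarith [norm_nonneg (powApply A k (x-y) hxy), norm_nonneg (x-y),
    sq_sob hx, sq_sob hy]

lemma sob_le_of_diff {B : H →ₗ.[ℂ] H} {k : ℕ} {D : ℝ} {x : H} (hD : 0 ≤ D)
    (hxA : x ∈ domPow A k) (hxB : x ∈ domPow B k)
    (hdiff : ‖powApply B k x hxB - powApply A k x hxA‖ ≤ D * sobNorm A k x hxA) :
    sobNorm B k x hxB ≤ (2 + D) * sobNorm A k x hxA := by
  have hs := sob_nonneg hxA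
  apply aux_sqrt_le_of_sq (by nlinarith)
  have h1 : ‖powApply B k x hxB‖ ≤ (1 + D) * sobNorm A k x hxA := by
    have e : powApply A k x hxA + (powApply B k x hxB - powApply A k x hxA)
        = powApply B k x hxB := by abel
    calc ‖powApply B k x hxB‖
        ≤ ‖powApply A k x hxA‖ + ‖powApply B k x hxB - powApply A k x hxA‖ := by
          conv_lhs => rw [← e]
          exact norm_add_le _ _
      _ ≤ sobNorm A k x hxA + D * sobNorm A k x hxA :=
          add_le_add (norm_powApply_le_sob hxA) hdiff
      _ = (1 + D) * sobNorm A k x hxA := by ring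
  have h2 : ‖x‖ ≤ sobNorm A k x hxA := norm_le_sob hxA
  nlinarith [norm_nonneg (powApply B k x hxB), norm_nonneg x]

lemma sob_mono (hsym : ∀ u v : A.domain, ⟪A u, (v : H)⟫_ℂ = ⟪(u : H), A v⟫_ℂ)
    {k : ℕ} {x : H} (hx1 : x ∈ domPow A (k+1)) (hxk : x ∈ domPow A k) :
    sobNorm A k x hxk ≤ 2 * sobNorm A (k+1) x hx1 := by
  have hs := sob_nonneg hx1
  apply aux_sqrt_le_of_sq (by linarith)
  have h1 : ‖powApply A k x hxk‖ ≤ sobNorm A (k+1) x hx1 := by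
    refine le_trans (interp hsym (Nat.le_succ k) hx1 hxk) (max_le (norm_le_sob hx1)
      (norm_powApply_le_sob hx1))
  have h2 : ‖x‖ ≤ sobNorm A (k+1) x hx1 := norm_le_sob hx1
  nlinarith [norm_nonneg (powApply A k x hxk), norm_nonneg x]

lemma sob_apply_le (hsym : ∀ u v : A.domain, ⟪A u, (v : H)⟫_ℂ = ⟪(u : H), A v⟫_ℂ)
    {k : ℕ} {x : H} (hx1 : x ∈ domPow A (k+1)) (h1 : x ∈ A.domain)
    (hu : A ⟨x, h1⟩ ∈ domPow A k) :
    sobNorm A k (A ⟨x, h1⟩) hu ≤ 2 * sobNorm A (k+1) x hx1 := by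
  have hs := sob_nonneg hx1
  apply aux_sqrt_le_of_sq (by linarith)
  have e : powApply A k (A ⟨x, h1⟩) hu = powApply A (k+1) x hx1 :=
    (powApply_succ hx1 h1 hu).symm
  have hm1 : x ∈ domPow A 1 := domPow_le (by omega) hx1
  have hAx : ‖A ⟨x, h1⟩‖ ≤ sobNorm A (k+1) x hx1 := by
    rw [← powApply_one hm1 h1]
    exact le_trans (interp hsym (by omega) hx1 hm1)
      (max_le (norm_le_sob hx1) (norm_powApply_le_sob hx1))
  rw [e]
  nlinarith [norm_powApply_le_sob hx1, norm_nonneg (powApply A (k+1) x hx1),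
    norm_nonneg (A ⟨x, h1⟩)]

/- ## Main theorem -/

/-- Sobolev-scale stability (after Iochum–Levy–Vassilevich): if `T` is densely defined
self-adjoint, `M` is bounded self-adjoint, and for every `k ≥ 1` the operator `M` maps
`dom T^k` into itself boundedly for the Sobolev norm `‖·‖_{T,k}`, then for every `k ≥ 1`
one has `dom (T + M)^k = dom T^k` and the Sobolev norms `‖·‖_{T,k}` and `‖·‖_{T+M,k}`
are equivalent on this common domain. -/
theorem statement5 (T : H →ₗ.[ℂ] H)
    (hdense : Dense (T.domain : Set H))
    (hT : T.adjoint = T)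
    (M : H →L[ℂ] H)
    (hM : ∀ x y : H, ⟪M x, y⟫_ℂ = ⟪x, M y⟫_ℂ)
    (hmap : ∀ k : ℕ, 1 ≤ k → ∀ x ∈ domPow T k, M x ∈ domPow T k)
    (hbdd : ∀ k : ℕ, 1 ≤ k → ∃ C : ℝ, 0 < C ∧
      ∀ (x : H) (hx : x ∈ domPow T k) (hMx : M x ∈ domPow T k),
        sobNorm T k (M x) hMx ≤ C * sobNorm T k x hx) :
    ∀ k : ℕ, 1 ≤ k →
      domPow (addBounded T M) k = domPow T k ∧
      ∃ c : ℝ, 0 < c ∧ ∃ C : ℝ, 0 < C ∧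
        ∀ (x : H) (hx : x ∈ domPow T k) (hx' : x ∈ domPow (addBounded T M) k),
          c * sobNorm T k x hx ≤ sobNorm (addBounded T M) k x hx' ∧
          sobNorm (addBounded T M) k x hx' ≤ C * sobNorm T k x hx := by
  -- symmetry of T
  have hsymT : ∀ u v : T.domain, ⟪T u, (v : H)⟫_ℂ = ⟪(u : H), T v⟫_ℂ := by
    have h := LinearPMap.adjoint_isFormalAdjoint (T := T) hdense
    rw [hT] at h
    exact fun u v => h u v
  set S := addBounded T M with hSdef
  have hSapp : ∀ (x : H) (hx : x ∈ T.domain), S ⟨x, hx⟩ = T ⟨x, hx⟩ + M x :=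
    fun _ _ => rfl
  have hsymS : ∀ u v : S.domain, ⟪S u, (v : H)⟫_ℂ = ⟪(u : H), S v⟫_ℂ := by
    intro u v
    have hu : (u : H) ∈ T.domain := u.2
    have hv : (v : H) ∈ T.domain := v.2
    have e1 : S u = T ⟨(u : H), hu⟩ + M (u : H) := rfl
    have e2 : S v = T ⟨(v : H), hv⟩ + M (v : H) := rfl
    rw [e1, e2, inner_add_left, inner_add_right,
      hsymT ⟨(u : H), hu⟩ ⟨(v : H), hv⟩, hM]
  -- M maps dom T^k to itself for all k
  have hmap0 : ∀ k, ∀ x ∈ domPow T k, M x ∈ domPow T k := by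
    intro k
    cases k with
    | zero => intro x _; trivial
    | succ k => exact hmap (k+1) (Nat.succ_le_succ (Nat.zero_le _))
  -- M is Sobolev-bounded for all k
  have hbdd0 : ∀ k, ∃ C : ℝ, 0 < C ∧
      ∀ (x : H) (hx : x ∈ domPow T k) (hMx : M x ∈ domPow T k),
        sobNorm T k (M x) hMx ≤ C * sobNorm T k x hx := by
    intro k
    cases k with
    | succ k => exact hbdd (k+1) (Nat.succ_le_succ (Nat.zero_le _))
    | zero =>
        refine ⟨‖M‖ + 1, by positivity, ?_⟩
        intro x hx hMx
        apply aux_sqrt_le_of_sq (by have := sob_nonneg (A := T) hx; positivity)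
        have h1 : ‖M x‖ ≤ (‖M‖ + 1) * ‖x‖ := by
          calc ‖M x‖ ≤ ‖M‖ * ‖x‖ := M.le_opNorm x
            _ ≤ (‖M‖ + 1) * ‖x‖ := by nlinarith [norm_nonneg x]
        have h2 : powApply T 0 (M x) hMx = M x := rfl
        have h3 : sobNorm T 0 x hx ^ 2 = ‖x‖ ^ 2 + ‖x‖ ^ 2 := sq_sob hx
        rw [h2]
        have h1' := mul_self_le_mul_self (norm_nonneg (M x)) h1
        have h3' : ((‖M‖+1) * sobNorm T 0 x hx)^2 = (‖M‖+1)^2 * (‖x‖^2 + ‖x‖^2) := by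
          rw [mul_pow, h3]
        rw [h3']
        nlinarith [norm_nonneg (M x), norm_nonneg x, M.opNorm_nonneg, h1']
  -- the joint induction
  have main : ∀ k : ℕ, domPow S k = domPow T k ∧
      (∃ D : ℝ, 0 ≤ D ∧ ∀ (x : H) (hxT : x ∈ domPow T k) (hxS : x ∈ domPow S k),
        ‖powApply S k x hxS - powApply T k x hxT‖ ≤ D * sobNorm T k x hxT) ∧
      (∃ D : ℝ, 0 ≤ D ∧ ∀ (x : H) (hxT : x ∈ domPow T k) (hxS : x ∈ domPow S k),
        ‖powApply S k x hxS - powApply T k x hxT‖ ≤ D * sobNorm S k x hxS) := by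
    intro k
    induction k with
    | zero =>
        refine ⟨rfl, ⟨0, le_refl 0, ?_⟩, ⟨0, le_refl 0, ?_⟩⟩ <;>
          · intro x hxT hxS
            have : powApply S 0 x hxS - powApply T 0 x hxT = 0 := sub_self x
            rw [this, norm_zero, zero_mul]
    | succ k ih =>
        obtain ⟨hdomk, ⟨DT, hDT0, hDT⟩, ⟨DS, hDS0, hDS⟩⟩ := ih
        obtain ⟨CM, hCM0, hCM⟩ := hbdd0 k
        -- sobolev norm comparisons at level k
        have cST : ∀ (x : H) (hxT : x ∈ domPow T k) (hxS : x ∈ domPow S k),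
            sobNorm S k x hxS ≤ (2 + DT) * sobNorm T k x hxT :=
          fun x hxT hxS => sob_le_of_diff hDT0 hxT hxS (hDT x hxT hxS)
        have cTS : ∀ (x : H) (hxT : x ∈ domPow T k) (hxS : x ∈ domPow S k),
            sobNorm T k x hxT ≤ (2 + DS) * sobNorm S k x hxS := by
          intro x hxT hxS
          refine sob_le_of_diff hDS0 hxS hxT ?_
          rw [norm_sub_rev]
          exact hDS x hxT hxS
        -- domain equality at level k+1
        have hdom1 : domPow S (k+1) = domPow T (k+1) := by
          ext x; constructor
          · rintro ⟨h1, h2⟩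
            have hxSk : x ∈ domPow S k := domPow_mono ⟨h1, h2⟩
            have hxTk : x ∈ domPow T k := hdomk ▸ hxSk
            have hMx : M x ∈ domPow T k := hmap0 k x hxTk
            have h2' : S ⟨x, h1⟩ ∈ domPow T k := hdomk ▸ h2
            have hTx : T ⟨x, h1⟩ ∈ domPow T k := by
              have e : T ⟨x, h1⟩ = S ⟨x, h1⟩ - M x := by exact eq_sub_of_add_eq (hSapp x h1).symm
              rw [e]; exact domPow_sub_mem h2' hMx
            exact ⟨h1, hTx⟩
          · rintro ⟨h1, h2⟩
            have hxTk : x ∈ domPow T k := domPow_mono ⟨h1, h2⟩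
            have hMx : M x ∈ domPow T k := hmap0 k x hxTk
            have hSx : S ⟨x, h1⟩ ∈ domPow S k := by
              rw [hdomk, hSapp]; exact domPow_add_mem h2 hMx
            exact ⟨h1, hSx⟩
        refine ⟨hdom1, ?_, ?_⟩
        -- common decomposition
        · refine ⟨2*DT + 2*(2+DT)*CM, by nlinarith [mul_nonneg (by linarith : (0:ℝ) ≤ 2+DT) hCM0.le], ?_⟩
          intro x hxT hxS
          obtain ⟨h1, hu⟩ := hxT
          have hxTk : x ∈ domPow T k := domPow_mono ⟨h1, hu⟩
          have hm : M x ∈ domPow T k := hmap0 k x hxTk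
          have huS : T ⟨x, h1⟩ ∈ domPow S k := hdomk ▸ hu
          have hmS : M x ∈ domPow S k := hdomk ▸ hm
          have hsum : T ⟨x, h1⟩ + M x ∈ domPow S k := domPow_add_mem huS hmS
          have hSx : S ⟨x, h1⟩ ∈ domPow S k := by rw [hSapp]; exact hsum
          have eS : powApply S (k+1) x hxS
              = powApply S k (T ⟨x, h1⟩) huS + powApply S k (M x) hmS := by
            rw [powApply_succ hxS h1 hSx,
              powApply_congr (hSapp x h1) hSx hsum, powApply_add huS hmS hsum]
          have eT : powApply T (k+1) x ⟨h1, hu⟩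
              = powApply T k (T ⟨x, h1⟩) hu := rfl
          have hdiff : powApply S (k+1) x hxS - powApply T (k+1) x ⟨h1, hu⟩
              = (powApply S k (T ⟨x, h1⟩) huS - powApply T k (T ⟨x, h1⟩) hu)
                + powApply S k (M x) hmS := by
            rw [eS, eT]; abel
          have b1 : ‖powApply S k (T ⟨x, h1⟩) huS - powApply T k (T ⟨x, h1⟩) hu‖
              ≤ DT * (2 * sobNorm T (k+1) x ⟨h1, hu⟩) := by
            refine le_trans (hDT _ hu huS) ?_
            exact mul_le_mul_of_nonneg_left (sob_apply_le hsymT ⟨h1, hu⟩ h1 hu) hDT0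
          have b2 : ‖powApply S k (M x) hmS‖
              ≤ (2+DT) * (CM * (2 * sobNorm T (k+1) x ⟨h1, hu⟩)) := by
            calc ‖powApply S k (M x) hmS‖ ≤ sobNorm S k (M x) hmS :=
                  norm_powApply_le_sob hmS
              _ ≤ (2+DT) * sobNorm T k (M x) hm := cST _ hm hmS
              _ ≤ (2+DT) * (CM * sobNorm T k x hxTk) := by
                  refine mul_le_mul_of_nonneg_left (hCM x hxTk hm) (by linarith)
              _ ≤ (2+DT) * (CM * (2 * sobNorm T (k+1) x ⟨h1, hu⟩)) := by
                  refine mul_le_mul_of_nonneg_left (mul_le_mul_of_nonneg_left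
                    (sob_mono hsymT ⟨h1, hu⟩ hxTk) (le_of_lt hCM0)) (by linarith)
          calc ‖powApply S (k+1) x hxS - powApply T (k+1) x ⟨h1, hu⟩‖
              ≤ ‖powApply S k (T ⟨x, h1⟩) huS - powApply T k (T ⟨x, h1⟩) hu‖
                + ‖powApply S k (M x) hmS‖ := by rw [hdiff]; exact norm_add_le _ _
            _ ≤ (2*DT + 2*(2+DT)*CM) * sobNorm T (k+1) x ⟨h1, hu⟩ := by
                  have hs := sob_nonneg (A := T)
                    (show x ∈ domPow T (k+1) from ⟨h1, hu⟩)
                  nlinarith [b1, b2, hs]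
        · have hP : (0:ℝ) ≤ (2+DT)*CM*(2+DS) :=
            mul_nonneg (mul_nonneg (by linarith) hCM0.le) (by linarith)
          refine ⟨DS*(2 + 2*(2+DT)*CM*(2+DS)) + 2*(2+DT)*CM*(2+DS), ?_, ?_⟩
          · nlinarith [mul_nonneg hDS0 hP]
          intro x hxT hxS
          obtain ⟨h1, hu⟩ := hxT
          have hxTk : x ∈ domPow T k := domPow_mono ⟨h1, hu⟩
          have hxSk : x ∈ domPow S k := hdomk ▸ hxTk
          have hm : M x ∈ domPow T k := hmap0 k x hxTk
          have huS : T ⟨x, h1⟩ ∈ domPow S k := hdomk ▸ hu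
          have hmS : M x ∈ domPow S k := hdomk ▸ hm
          have hsum : T ⟨x, h1⟩ + M x ∈ domPow S k := domPow_add_mem huS hmS
          have hSx : S ⟨x, h1⟩ ∈ domPow S k := by rw [hSapp]; exact hsum
          have eS : powApply S (k+1) x hxS
              = powApply S k (T ⟨x, h1⟩) huS + powApply S k (M x) hmS := by
            rw [powApply_succ hxS h1 hSx,
              powApply_congr (hSapp x h1) hSx hsum, powApply_add huS hmS hsum]
          have eT : powApply T (k+1) x ⟨h1, hu⟩
              = powApply T k (T ⟨x, h1⟩) hu := rfl
          have hdiff : powApply S (k+1) x hxS - powApply T (k+1) x ⟨h1, hu⟩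
              = (powApply S k (T ⟨x, h1⟩) huS - powApply T k (T ⟨x, h1⟩) hu)
                + powApply S k (M x) hmS := by
            rw [eS, eT]; abel
          -- bound on sobNorm S k (M x)
          have bm : sobNorm S k (M x) hmS
              ≤ (2+DT)*CM*(2+DS) * (2 * sobNorm S (k+1) x hxS) := by
            calc sobNorm S k (M x) hmS ≤ (2+DT) * sobNorm T k (M x) hm := cST _ hm hmS
              _ ≤ (2+DT) * (CM * sobNorm T k x hxTk) :=
                  mul_le_mul_of_nonneg_left (hCM x hxTk hm) (by linarith)
              _ ≤ (2+DT) * (CM * ((2+DS) * sobNorm S k x hxSk)) := by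
                  refine mul_le_mul_of_nonneg_left (mul_le_mul_of_nonneg_left
                    (cTS x hxTk hxSk) (le_of_lt hCM0)) (by linarith)
              _ ≤ (2+DT) * (CM * ((2+DS) * (2 * sobNorm S (k+1) x hxS))) := by
                  refine mul_le_mul_of_nonneg_left (mul_le_mul_of_nonneg_left
                    (mul_le_mul_of_nonneg_left (sob_mono hsymS hxS hxSk)
                      (by linarith)) (le_of_lt hCM0)) (by linarith)
              _ = (2+DT)*CM*(2+DS) * (2 * sobNorm S (k+1) x hxS) := by ring
          -- bound on sobNorm S k (T x)
          have bu : sobNorm S k (T ⟨x, h1⟩) huS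
              ≤ 2 * sobNorm S (k+1) x hxS + (2+DT)*CM*(2+DS) * (2 * sobNorm S (k+1) x hxS) := by
            have e : T ⟨x, h1⟩ = S ⟨x, h1⟩ - M x := by rw [hSapp]; abel
            have hsub : S ⟨x, h1⟩ - M x ∈ domPow S k := by rw [← e]; exact huS
            calc sobNorm S k (T ⟨x, h1⟩) huS
                = sobNorm S k (S ⟨x, h1⟩ - M x) hsub := by
                  congr 1
              _ ≤ sobNorm S k (S ⟨x, h1⟩) hSx + sobNorm S k (M x) hmS :=
                  sob_triangle_sub hSx hmS hsub
              _ ≤ 2 * sobNorm S (k+1) x hxS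
                  + (2+DT)*CM*(2+DS) * (2 * sobNorm S (k+1) x hxS) := by
                  refine add_le_add ?_ bm
                  exact sob_apply_le hsymS hxS h1 hSx
          have b1 : ‖powApply S k (T ⟨x, h1⟩) huS - powApply T k (T ⟨x, h1⟩) hu‖
              ≤ DS * sobNorm S k (T ⟨x, h1⟩) huS := hDS _ hu huS
          have b2 : ‖powApply S k (M x) hmS‖ ≤ sobNorm S k (M x) hmS :=
            norm_powApply_le_sob hmS
          calc ‖powApply S (k+1) x hxS - powApply T (k+1) x ⟨h1, hu⟩‖
              ≤ ‖powApply S k (T ⟨x, h1⟩) huS - powApply T k (T ⟨x, h1⟩) hu‖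
                + ‖powApply S k (M x) hmS‖ := by rw [hdiff]; exact norm_add_le _ _
            _ ≤ (DS*(2 + 2*(2+DT)*CM*(2+DS)) + 2*(2+DT)*CM*(2+DS))
                * sobNorm S (k+1) x hxS := by
                  have hs := sob_nonneg hxS
                  nlinarith [b1, b2, bm, bu]
  -- conclusion
  intro k hk
  obtain ⟨hdom, ⟨DT, hDT0, hDT⟩, ⟨DS, hDS0, hDS⟩⟩ := main k
  refine ⟨hdom, (2 + DS)⁻¹, by positivity, 2 + DT, by linarith, ?_⟩
  intro x hx hx'
  constructor
  · have h := sob_le_of_diff hDS0 hx' hx (by rw [norm_sub_rev]; exact hDS x hx hx')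
    rw [inv_mul_le_iff₀ (by linarith)]
    linarith [h]
  · exact sob_le_of_diff hDT0 hx hx' (hDT x hx hx')
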